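/- arXiv:2002.07352 — 3 statements merged into one kernel-verified Lean document; each statement's English description precedes it below -/
import Mathlib

section
/- The function W(x) = (1 + |x|²/3)^{-1/2} on ℝ³ satisfies the elliptic equation ΔW = -W⁵. -/
open Real

lemma aux_deriv (b c : ℝ) (hc : 0 < c) :
    iteratedDeriv 2 (fun s : ℝ => (c + (b + s) ^ 2 / 3) ^ (-(1:ℝ)/2)) 0
      = -(1/3) * (c + b ^ 2 / 3) ^ (-(3:ℝ)/2)
        + (b ^ 2 / 3) * (c + b ^ 2 / 3) ^ (-(5:ℝ)/2) := by
  have hu : ∀ s : ℝ, 0 < c + (b + s) ^ 2 / 3 := fun s => by positivity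
  have hinner : ∀ s : ℝ, HasDerivAt (fun s : ℝ => c + (b + s) ^ 2 / 3) (2 * (b + s) / 3) s := by
    intro s
    have h1 : HasDerivAt (fun s : ℝ => b + s) 1 s := (hasDerivAt_id s).const_add b
    have := ((h1.pow 2).div_const 3).const_add c
    refine this.congr_deriv ?_
    ring
  have hderiv1 : deriv (fun s : ℝ => (c + (b + s) ^ 2 / 3) ^ (-(1:ℝ)/2))
      = fun s : ℝ => (-(b + s)/3) * (c + (b + s) ^ 2 / 3) ^ (-(3:ℝ)/2) := by
    funext s
    have := (hinner s).rpow_const (p := -(1:ℝ)/2) (Or.inl (hu s).ne')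
    rw [this.deriv, show (-(1:ℝ)/2 - 1) = -(3:ℝ)/2 by norm_num]
    ring
  rw [iteratedDeriv_succ, iteratedDeriv_one, hderiv1]
  have h2 := (hinner 0).rpow_const (p := -(3:ℝ)/2) (Or.inl (hu 0).ne')
  have h3 : HasDerivAt (fun s : ℝ => -(b + s)/3) (-(1:ℝ)/3) 0 := by
    have h1 : HasDerivAt (fun s : ℝ => b + s) 1 (0:ℝ) := (hasDerivAt_id 0).const_add b
    have := (h1.fun_neg).div_const 3
    convert this using 1

  have h4 := h3.fun_mul h2
  rw [h4.deriv, show (-(3:ℝ)/2 - 1) = -(5:ℝ)/2 by norm_num]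
  simp only [add_zero]
  ring


/-- The ground state `W(x) = (1 + ‖x‖²/3)^{-1/2}` on `ℝ³` satisfies `ΔW = -W⁵`,
where the Laplacian is written as the sum of second derivatives in the coordinate
directions. -/
theorem ground_state_elliptic_equation
    (W : EuclideanSpace ℝ (Fin 3) → ℝ)
    (hW : ∀ x, W x = (1 + ‖x‖ ^ 2 / 3) ^ (-(1:ℝ)/2)) :
    ∀ x : EuclideanSpace ℝ (Fin 3),
      (∑ i : Fin 3,
          iteratedDeriv 2 (fun s : ℝ => W (x + s • EuclideanSpace.single i (1:ℝ))) 0)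
        = -(W x) ^ 5 := by
  intro x
  have hnorm : ∀ y : EuclideanSpace ℝ (Fin 3), ‖y‖ ^ 2 = ∑ j : Fin 3, y j ^ 2 := by
    intro y
    rw [EuclideanSpace.norm_eq, Real.sq_sqrt (by positivity)]
    simp [Real.norm_eq_abs, sq_abs]
  set S : ℝ := ∑ j : Fin 3, x j ^ 2 with hSdef
  have hS3 : S = x 0 ^ 2 + x 1 ^ 2 + x 2 ^ 2 := by
    rw [hSdef, Fin.sum_univ_three]
  have hkey : ∀ i : Fin 3,
      iteratedDeriv 2 (fun s : ℝ => W (x + s • EuclideanSpace.single i (1:ℝ))) 0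
        = -(1/3) * (1 + S / 3) ^ (-(3:ℝ)/2) + (x i ^ 2 / 3) * (1 + S / 3) ^ (-(5:ℝ)/2) := by
    intro i
    have hci : 0 < 1 + (S - x i ^ 2) / 3 := by
      have := Finset.single_le_sum (f := fun j : Fin 3 => x j ^ 2)
        (fun j _ => sq_nonneg _) (Finset.mem_univ i)
      simp only [] at this
      rw [hSdef]; linarith [this]
    have hfun : (fun s : ℝ => W (x + s • EuclideanSpace.single i (1:ℝ)))
        = fun s : ℝ => ((1 + (S - x i ^ 2) / 3) + (x i + s) ^ 2 / 3) ^ (-(1:ℝ)/2) := by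
      funext s
      rw [hW]
      congr 1
      have hy : ‖x + s • EuclideanSpace.single i (1:ℝ)‖ ^ 2 = S - x i ^ 2 + (x i + s) ^ 2 := by
        rw [hnorm, hS3]
        fin_cases i <;>
          simp [Fin.sum_univ_three, EuclideanSpace.single_apply, PiLp.add_apply,
            PiLp.smul_apply, smul_eq_mul] <;> ring
      rw [hy]; ring
    rw [hfun, aux_deriv (x i) _ hci,
      show (1 + (S - x i ^ 2) / 3) + x i ^ 2 / 3 = 1 + S / 3 by ring]
  rw [Fin.sum_univ_three, hkey 0, hkey 1, hkey 2, hW]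
  have hA : (0:ℝ) < 1 + S / 3 := by nlinarith [hS3, sq_nonneg (x 0), sq_nonneg (x 1), sq_nonneg (x 2)]
  rw [hnorm x, ← hSdef]
  have h5 : ((1 + S / 3) ^ (-(1:ℝ)/2)) ^ (5:ℕ) = (1 + S / 3) ^ (-(5:ℝ)/2) := by
    rw [← Real.rpow_natCast ((1 + S / 3) ^ (-(1:ℝ)/2)) 5, ← Real.rpow_mul hA.le]
    norm_num
  rw [h5, show (-(3:ℝ)/2) = 1 + (-(5:ℝ)/2) by norm_num, Real.rpow_add hA, Real.rpow_one]
  linear_combination (-( (1 + S / 3) ^ (-(5:ℝ)/2) )/3) * hS3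
end

section
/- Let f ∈ H^s_rad(ℝ³) and let s' > s with f ∉ H^{s'}(ℝ³). Then the radial randomization f^ω satisfies ‖f^ω‖_{H^{s'}} = ∞ almost surely. -/
open MeasureTheory ProbabilityTheory
open scoped ENNReal NNReal

set_option maxHeartbeats 1000000

section Aux

lemma gauss_singleton_zero (x : ℝ) : (gaussianReal 0 1 : Measure ℝ) {x} = 0 := by
  rw [gaussianReal_of_var_ne_zero _ one_ne_zero,
    withDensity_apply _ (measurableSet_singleton x)]
  rw [Measure.restrict_eq_zero.2 (by simp)]
  simp

/-- Main probabilistic lemma: if `(X n)` are independent standard Gaussians and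
`∑ a n = ⊤`, then almost surely `∑ X n ^ 2 * a n = ⊤`. -/
lemma gaussian_tsum_top {Ω : Type} [mΩ : MeasurableSpace Ω] (μ : Measure Ω)
    [IsProbabilityMeasure μ]
    (X : ℕ → Ω → ℝ) (hXmeas : ∀ n, Measurable (X n))
    (hindep : iIndepFun X μ)
    (hgauss : ∀ n, Measure.map (X n) μ = gaussianReal 0 1)
    (a : ℕ → ℝ≥0∞) (ha : ∑' n, a n = ⊤) :
    ∀ᵐ ω ∂μ, ∑' n, ENNReal.ofReal ((X n ω) ^ 2) * a n = ⊤ := by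
  by_cases hA : ∃ n, a n = ⊤
  · obtain ⟨n, hn⟩ := hA
    have hzero : μ {ω | X n ω = 0} = 0 := by
      have : μ (X n ⁻¹' {0}) = (Measure.map (X n) μ) {0} :=
        (Measure.map_apply (hXmeas n) (measurableSet_singleton 0)).symm
      rw [hgauss n, gauss_singleton_zero] at this
      exact this
    have hne : ∀ᵐ ω ∂μ, X n ω ≠ 0 := by
      rw [ae_iff]
      simpa using hzero
    filter_upwards [hne] with ω hω
    have hterm : ENNReal.ofReal ((X n ω) ^ 2) * a n = ⊤ := by
      rw [hn, ENNReal.mul_top]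
      simp only [ne_eq, ENNReal.ofReal_eq_zero, not_le]
      positivity
    exact eq_top_iff.2 (hterm ▸ ENNReal.le_tsum n)
  · push_neg at hA
    -- truncated weights
    set b : ℕ → ℝ≥0∞ := fun n => min (a n) 1 with hb_def
    have hb_le_a : ∀ n, b n ≤ a n := fun n => min_le_left _ _
    have hb_le_one : ∀ n, b n ≤ 1 := fun n => min_le_right _ _
    have hb_ne_top : ∀ n, b n ≠ ⊤ := fun n =>
      ne_top_of_le_ne_top ENNReal.one_ne_top (hb_le_one n)
    set r : ℕ → ℝ := fun n => (b n).toReal with hr_def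
    have hr_nonneg : ∀ n, 0 ≤ r n := fun n => ENNReal.toReal_nonneg
    have hr_le_one : ∀ n, r n ≤ 1 := fun n => by
      have := ENNReal.toReal_mono ENNReal.one_ne_top (hb_le_one n)
      simpa using this
    have hofReal_r : ∀ n, ENNReal.ofReal (r n) = b n := fun n =>
      ENNReal.ofReal_toReal (hb_ne_top n)
    -- the truncated weights still sum to ⊤
    have hsum_b : ∑' n, b n = ⊤ := by
      by_contra hb
      have htend := ENNReal.tendsto_atTop_zero_of_tsum_ne_top hb
      have hev : ∀ᶠ n in Filter.atTop, b n < 1 :=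
        htend.eventually (gt_mem_nhds (by norm_num : (0 : ℝ≥0∞) < 1))
      obtain ⟨N, hN⟩ := Filter.eventually_atTop.1 hev
      have hab : ∀ n, N ≤ n → a n = b n := by
        intro n hn
        have h1 : b n < 1 := hN n hn
        have h2 : a n < 1 := by
          by_contra hge
          push_neg at hge
          have : b n = 1 := min_eq_right hge
          simp [this] at h1
        simpa [hb_def] using (min_eq_left h2.le).symm
      have hsplit : (∑' n, a n)
          = (∑' n, if n < N then a n else 0) + ∑' n, (if n < N then (0 : ℝ≥0∞) else a n) := by
        rw [← ENNReal.tsum_add]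
        congr 1; funext n; by_cases hn : n < N <;> simp [hn]
      have hfin1 : (∑' n, if n < N then a n else 0) ≠ ⊤ := by
        rw [tsum_eq_sum (s := Finset.range N)
          (by intro n hn; rw [if_neg (Finset.mem_range.not.1 hn)])]
        refine (ENNReal.sum_lt_top.2 fun i _ => ?_).ne
        by_cases hi : i < N <;> simp [hi, (hA i).lt_top]
      have hfin2 : (∑' n, if n < N then (0 : ℝ≥0∞) else a n) ≠ ⊤ := by
        refine ne_top_of_le_ne_top hb (ENNReal.tsum_le_tsum fun n => ?_)
        by_cases hn : n < N
        · simp [hn]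
        · rw [if_neg hn, hab n (not_lt.1 hn)]
      rw [ha] at hsplit
      exact (ENNReal.add_ne_top.2 ⟨hfin1, hfin2⟩) hsplit.symm
    -- gaussian constants
    set γ : Measure ℝ := gaussianReal 0 1 with hγ_def
    have hγprob : IsProbabilityMeasure γ := by rw [hγ_def]; infer_instance
    have hmeas_min : Measurable fun x : ℝ => min (x ^ 2) 1 :=
      (measurable_id.pow_const 2).min measurable_const
    have hint_min : Integrable (fun x : ℝ => min (x ^ 2) 1) γ := by
      refine (integrable_const (1 : ℝ)).mono' hmeas_min.aestronglyMeasurable ?_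
      refine Filter.Eventually.of_forall fun x => ?_
      rw [Real.norm_eq_abs, abs_of_nonneg (le_min (sq_nonneg x) zero_le_one)]
      exact min_le_right _ _
    set c : ℝ := ∫ x, min (x ^ 2) 1 ∂γ with hc_def
    have hc_pos : 0 < c := by
      rw [hc_def]
      rw [integral_pos_iff_support_of_nonneg
        (fun x => le_min (sq_nonneg x) zero_le_one) hint_min]
      have hsub : ({0}ᶜ : Set ℝ) ⊆ Function.support fun x => min (x ^ 2) 1 := by
        intro x hx
        simp only [Set.mem_compl_iff, Set.mem_singleton_iff] at hx
        simp only [Function.mem_support]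
        have h1 : 0 < x ^ 2 := by positivity
        exact (lt_min h1 one_pos).ne'
      have hcompl : γ ({0}ᶜ : Set ℝ) = 1 := by
        rw [measure_compl (measurableSet_singleton 0) (measure_ne_top _ _)]
        rw [hγ_def, gauss_singleton_zero]
        simp
      calc (0 : ℝ≥0∞) < 1 := one_pos
        _ = γ ({0}ᶜ : Set ℝ) := hcompl.symm
        _ ≤ γ (Function.support fun x => min (x ^ 2) 1) := measure_mono hsub
    set κ : ℝ := 1 - Real.exp (-1) with hκ_def
    have hκ_pos : 0 < κ := by
      rw [hκ_def]
      have : Real.exp (-1) < 1 := Real.exp_lt_one_iff.2 (by norm_num)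
      linarith
    -- the random variables
    set V : ℕ → Ω → ℝ≥0∞ :=
      fun n ω => ENNReal.ofReal (Real.exp (-(min ((X n ω) ^ 2) 1 * r n))) with hV_def
    have hVmeas : ∀ n, Measurable (V n) := by
      intro n
      exact ENNReal.measurable_ofReal.comp (Real.measurable_exp.comp
        ((((hXmeas n).pow_const 2).min measurable_const).mul_const (r n)).neg)
    have hVindep : iIndepFun V μ := by
      have := hindep.comp
        (fun n (x : ℝ) => ENNReal.ofReal (Real.exp (-(min (x ^ 2) 1 * r n))))
        (fun n => ENNReal.measurable_ofReal.comp (Real.measurable_exp.comp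
          (((measurable_id.pow_const 2).min measurable_const).mul_const (r n)).neg))
      exact this
    -- bound on single expectations
    have hV_le : ∀ n, (∫⁻ ω, V n ω ∂μ) ≤ ENNReal.ofReal (Real.exp (-(κ * c * r n))) := by
      intro n
      have hgmeas : Measurable fun x : ℝ =>
          ENNReal.ofReal (Real.exp (-(min (x ^ 2) 1 * r n))) :=
        ENNReal.measurable_ofReal.comp (Real.measurable_exp.comp
          (((measurable_id.pow_const 2).min measurable_const).mul_const (r n)).neg)
      have hmap : (∫⁻ ω, V n ω ∂μ)
          = ∫⁻ x, ENNReal.ofReal (Real.exp (-(min (x ^ 2) 1 * r n))) ∂γ := by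
        rw [← hgauss n, lintegral_map hgmeas (hXmeas n)]
      rw [hmap]
      have hintg : Integrable (fun x : ℝ => Real.exp (-(min (x ^ 2) 1 * r n))) γ := by
        refine (integrable_const (1 : ℝ)).mono'
          ((Real.measurable_exp.comp
            (((measurable_id.pow_const 2).min measurable_const).mul_const (r n)).neg)).aestronglyMeasurable ?_
        refine Filter.Eventually.of_forall fun x => ?_
        rw [Real.norm_eq_abs, abs_of_nonneg (Real.exp_nonneg _)]
        refine Real.exp_le_one_iff.2 ?_
        simp only [neg_nonpos]
        exact mul_nonneg (le_min (sq_nonneg x) zero_le_one) (hr_nonneg n)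
      rw [← ofReal_integral_eq_lintegral_ofReal hintg
        (Filter.Eventually.of_forall fun x => Real.exp_nonneg _)]
      refine ENNReal.ofReal_le_ofReal ?_
      -- ∫ exp(-Z) ≤ 1 - κ c r ≤ exp(-(κ c r))
      have hstep1 : (∫ x, Real.exp (-(min (x ^ 2) 1 * r n)) ∂γ)
          ≤ ∫ x, (1 - (κ * r n) * min (x ^ 2) 1) ∂γ := by
        refine integral_mono hintg
          ((integrable_const (1 : ℝ)).sub (hint_min.const_mul (κ * r n))) ?_
        intro x
        -- convexity: exp(-t) ≤ 1 - κ t for t ∈ [0,1]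
        set t : ℝ := min (x ^ 2) 1 * r n with ht_def
        have ht0 : 0 ≤ t := mul_nonneg (le_min (sq_nonneg x) zero_le_one) (hr_nonneg n)
        have ht1 : t ≤ 1 :=
          mul_le_one₀ (min_le_right _ _) (hr_nonneg n) (hr_le_one n)
        have hconv := convexOn_exp.2 (Set.mem_univ (-1 : ℝ)) (Set.mem_univ (0 : ℝ))
          ht0 (by linarith : (0:ℝ) ≤ 1 - t) (by ring)
        simp only [smul_eq_mul, mul_neg, mul_one, mul_zero, add_zero, Real.exp_zero] at hconv
        have : Real.exp (-t) ≤ t * Real.exp (-1) + (1 - t) := hconv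
        have hineq : Real.exp (-t) ≤ 1 - κ * t := by
          rw [hκ_def]; nlinarith [this]
        calc Real.exp (-t) ≤ 1 - κ * t := hineq
          _ = 1 - (κ * r n) * min (x ^ 2) 1 := by rw [ht_def]; ring
      have hstep2 : (∫ x, (1 - (κ * r n) * min (x ^ 2) 1) ∂γ) = 1 - κ * c * r n := by
        rw [integral_sub (integrable_const 1) (hint_min.const_mul (κ * r n)),
          integral_const, integral_const_mul]
        simp only [measure_univ, probReal_univ, ENNReal.toReal_one, smul_eq_mul, one_mul, ← hc_def]
        ring
      have hstep3 : 1 - κ * c * r n ≤ Real.exp (-(κ * c * r n)) := by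
        have := Real.add_one_le_exp (-(κ * c * r n))
        linarith
      linarith [hstep1, hstep2 ▸ hstep1]
    -- product of expectations
    have hWmeas : ∀ N, Measurable fun ω => ∏ n ∈ Finset.range N, V n ω := by
      intro N
      exact Finset.measurable_prod _ fun n _ => hVmeas n
    have hW_int : ∀ N, (∫⁻ ω, ∏ n ∈ Finset.range N, V n ω ∂μ)
        = ∏ n ∈ Finset.range N, ∫⁻ ω, V n ω ∂μ := by
      intro N
      induction N with
      | zero => simp
      | succ N ih =>
        have hIndep : IndepFun (∏ j ∈ Finset.range N, V j) (V N) μ :=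
          hVindep.indepFun_prod_range_succ hVmeas N
        have hprodmeas : Measurable (∏ j ∈ Finset.range N, V j) := by
          rw [show (∏ j ∈ Finset.range N, V j)
              = fun ω => ∏ j ∈ Finset.range N, V j ω from
            funext fun ω => Finset.prod_apply ω (Finset.range N) V]
          exact hWmeas N
        have hkey := lintegral_mul_eq_lintegral_mul_lintegral_of_indepFun
          hprodmeas (hVmeas N) hIndep
        simp only [Pi.mul_apply, Finset.prod_apply] at hkey
        simp only [Finset.prod_range_succ]
        rw [← ih]
        exact hkey
    have hW_le : ∀ N, (∫⁻ ω, ∏ n ∈ Finset.range N, V n ω ∂μ)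
        ≤ ENNReal.ofReal (Real.exp (-(κ * c * ∑ n ∈ Finset.range N, r n))) := by
      intro N
      rw [hW_int N]
      calc (∏ n ∈ Finset.range N, ∫⁻ ω, V n ω ∂μ)
          ≤ ∏ n ∈ Finset.range N, ENNReal.ofReal (Real.exp (-(κ * c * r n))) :=
            Finset.prod_le_prod' fun n _ => hV_le n
        _ = ENNReal.ofReal (∏ n ∈ Finset.range N, Real.exp (-(κ * c * r n))) :=
            (ENNReal.ofReal_prod_of_nonneg fun n _ => Real.exp_nonneg _).symm
        _ = ENNReal.ofReal (Real.exp (-(κ * c * ∑ n ∈ Finset.range N, r n))) := by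
            rw [← Real.exp_sum]
            congr 1
            rw [Finset.mul_sum]
            simp [Finset.sum_neg_distrib]
    -- partial sums of r are unbounded
    have hR_unbdd : ∀ M : ℝ, ∃ N, M < ∑ n ∈ Finset.range N, r n := by
      intro M
      have hiSup : (⨆ N, ∑ n ∈ Finset.range N, b n) = ⊤ := by
        rw [← ENNReal.tsum_eq_iSup_nat, hsum_b]
      have hlt : ENNReal.ofReal M < ⨆ N, ∑ n ∈ Finset.range N, b n := by
        rw [hiSup]; exact ENNReal.ofReal_lt_top
      obtain ⟨N, hN⟩ := lt_iSup_iff.1 hlt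
      refine ⟨N, ?_⟩
      have hsum_eq : (∑ n ∈ Finset.range N, b n)
          = ENNReal.ofReal (∑ n ∈ Finset.range N, r n) := by
        rw [ENNReal.ofReal_sum_of_nonneg fun n _ => hr_nonneg n]
        exact Finset.sum_congr rfl fun n _ => (hofReal_r n).symm
      rw [hsum_eq] at hN
      by_contra hle
      push_neg at hle
      exact absurd (ENNReal.ofReal_le_ofReal hle) (not_le.2 hN)
    -- conclude ∫⁻ iInf = 0
    set W : Ω → ℝ≥0∞ := fun ω => ⨅ N, ∏ n ∈ Finset.range N, V n ω with hW_def
    have hWinfmeas : Measurable W := Measurable.iInf hWmeas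
    have hWzero : (∫⁻ ω, W ω ∂μ) = 0 := by
      by_contra hne
      have hItop : (∫⁻ ω, W ω ∂μ) ≠ ⊤ := by
        refine ne_top_of_le_ne_top ENNReal.one_ne_top ?_
        calc (∫⁻ ω, W ω ∂μ) ≤ ∫⁻ ω, ∏ n ∈ Finset.range 0, V n ω ∂μ :=
              lintegral_mono fun ω => iInf_le _ 0
          _ = 1 := by simp
      set t : ℝ := (∫⁻ ω, W ω ∂μ).toReal with ht_def
      have ht_pos : 0 < t := ENNReal.toReal_pos hne hItop
      obtain ⟨N, hN⟩ := hR_unbdd ((-Real.log t) / (κ * c))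
      have hκc : 0 < κ * c := mul_pos hκ_pos hc_pos
      have hexp_lt : Real.exp (-(κ * c * ∑ n ∈ Finset.range N, r n)) < t := by
        rw [← Real.exp_log ht_pos]
        apply Real.exp_lt_exp.2
        rw [div_lt_iff₀ hκc] at hN
        nlinarith
      have hle : (∫⁻ ω, W ω ∂μ)
          ≤ ENNReal.ofReal (Real.exp (-(κ * c * ∑ n ∈ Finset.range N, r n))) :=
        le_trans (lintegral_mono fun ω => iInf_le _ N) (hW_le N)
      have : (∫⁻ ω, W ω ∂μ) < ∫⁻ ω, W ω ∂μ := by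
        calc (∫⁻ ω, W ω ∂μ)
            ≤ ENNReal.ofReal (Real.exp (-(κ * c * ∑ n ∈ Finset.range N, r n))) := hle
          _ < ENNReal.ofReal t := by
              exact (ENNReal.ofReal_lt_ofReal_iff ht_pos).2 hexp_lt
          _ = ∫⁻ ω, W ω ∂μ := ENNReal.ofReal_toReal hItop
      exact absurd this (lt_irrefl _)
    have hW_ae : ∀ᵐ ω ∂μ, W ω = 0 := (lintegral_eq_zero_iff hWinfmeas).1 hWzero
    -- conclude
    filter_upwards [hW_ae] with ω hω
    by_contra hne
    -- partial sums of Z are bounded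
    set T : ℝ≥0∞ := ∑' n, ENNReal.ofReal ((X n ω) ^ 2) * a n with hT_def
    have hT_ne : T ≠ ⊤ := hne
    set Z : ℕ → ℝ := fun n => min ((X n ω) ^ 2) 1 * r n with hZ_def
    have hZ_nonneg : ∀ n, 0 ≤ Z n := fun n =>
      mul_nonneg (le_min (sq_nonneg _) zero_le_one) (hr_nonneg n)
    have hZ_le : ∀ n, ENNReal.ofReal (Z n) ≤ ENNReal.ofReal ((X n ω) ^ 2) * a n := by
      intro n
      rw [hZ_def]
      rw [ENNReal.ofReal_mul (le_min (sq_nonneg _) zero_le_one), hofReal_r n]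
      exact mul_le_mul' (ENNReal.ofReal_le_ofReal (min_le_left _ _)) (hb_le_a n)
    have hS_bdd : ∀ N, (∑ n ∈ Finset.range N, Z n) ≤ T.toReal := by
      intro N
      have h1 : ENNReal.ofReal (∑ n ∈ Finset.range N, Z n) ≤ T := by
        rw [ENNReal.ofReal_sum_of_nonneg fun n _ => hZ_nonneg n]
        calc (∑ n ∈ Finset.range N, ENNReal.ofReal (Z n))
            ≤ ∑ n ∈ Finset.range N, ENNReal.ofReal ((X n ω) ^ 2) * a n :=
              Finset.sum_le_sum fun n _ => hZ_le n
          _ ≤ T := ENNReal.sum_le_tsum _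
      exact (ENNReal.ofReal_le_iff_le_toReal hT_ne).1 h1
    have hW_pos : 0 < W ω := by
      rw [hW_def]
      simp only [lt_iInf_iff]
      refine ⟨ENNReal.ofReal (Real.exp (-T.toReal)), ENNReal.ofReal_pos.2 (Real.exp_pos _),
        fun N => ?_⟩
      have hprod : (∏ n ∈ Finset.range N, V n ω)
          = ENNReal.ofReal (Real.exp (-(∑ n ∈ Finset.range N, Z n))) := by
        rw [hV_def]
        rw [← ENNReal.ofReal_prod_of_nonneg fun n _ => Real.exp_nonneg _]
        congr 1
        rw [← Real.exp_sum]
        congr 1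
        simp [hZ_def, Finset.sum_neg_distrib]
      rw [hprod]
      refine ENNReal.ofReal_le_ofReal ?_
      apply Real.exp_le_exp.2
      simp only [neg_le_neg_iff]
      exact hS_bdd N
    rw [hω] at hW_pos
    exact absurd hW_pos (lt_irrefl _)

end Aux

/-- No regularity gain for the radial randomization, stated on the Fourier side:
if `F = \hat f` is radial, belongs to `H^s` but `‖f‖_{H^{s'}} = ∞` for some `s' > s`,
then almost surely `‖f^ω‖_{H^{s'}} = ∞`, where `f^ω` has Fourier transform
`Σ_n X_n 1_{[n,n+1)}(‖ξ‖) F(ξ)` with `(X_n)` independent standard Gaussians. -/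
theorem radial_randomization_no_gain
    (Ω : Type) (mΩ : MeasurableSpace Ω) (μ : Measure Ω) [IsProbabilityMeasure μ]
    (X : ℕ → Ω → ℝ) (hXmeas : ∀ n, Measurable (X n))
    (hindep : iIndepFun X μ)
    (hgauss : ∀ n, Measure.map (X n) μ = gaussianReal 0 1)
    (s s' : ℝ) (hs : s < s')
    (F : EuclideanSpace ℝ (Fin 3) → ℂ) (hFmeas : Measurable F)
    (hrad : ∀ ξ ξ' : EuclideanSpace ℝ (Fin 3), ‖ξ‖ = ‖ξ'‖ → F ξ = F ξ')
    (hHs : (∫⁻ ξ : EuclideanSpace ℝ (Fin 3),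
        ENNReal.ofReal ((1 + ‖ξ‖ ^ 2) ^ s * ‖F ξ‖ ^ 2)) < ⊤)
    (hHs' : (∫⁻ ξ : EuclideanSpace ℝ (Fin 3),
        ENNReal.ofReal ((1 + ‖ξ‖ ^ 2) ^ s' * ‖F ξ‖ ^ 2)) = ⊤) :
    ∀ᵐ ω ∂μ,
      (∫⁻ ξ : EuclideanSpace ℝ (Fin 3),
        ENNReal.ofReal ((1 + ‖ξ‖ ^ 2) ^ s' *
          ‖∑' n : ℕ, (if (n : ℝ) ≤ ‖ξ‖ ∧ ‖ξ‖ < n + 1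
              then ((X n ω : ℝ) : ℂ) else 0) * F ξ‖ ^ 2)) = ⊤ := by
  classical
  -- annuli
  set A : ℕ → Set (EuclideanSpace ℝ (Fin 3)) := fun n => {ξ : EuclideanSpace ℝ (Fin 3) | (n : ℝ) ≤ ‖ξ‖ ∧ ‖ξ‖ < n + 1} with hA_def
  have hA_eq : ∀ n, A n = (fun ξ : EuclideanSpace ℝ (Fin 3) => ‖ξ‖) ⁻¹' (Set.Ico (n : ℝ) (n + 1)) := by
    intro n; rfl
  have hAmeas : ∀ n, MeasurableSet (A n) := by
    intro n
    rw [hA_eq n]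
    exact measurable_norm measurableSet_Ico
  have hA_floor : ∀ ξ : EuclideanSpace ℝ (Fin 3), ∀ n : ℕ, ξ ∈ A n → ⌊‖ξ‖⌋₊ = n := by
    intro ξ n hξ
    exact (Nat.floor_eq_iff (norm_nonneg ξ)).2 hξ
  have hA_mem : ∀ ξ : EuclideanSpace ℝ (Fin 3), ξ ∈ A ⌊‖ξ‖⌋₊ :=
    fun ξ => ⟨Nat.floor_le (norm_nonneg ξ), Nat.lt_floor_add_one _⟩
  have hdisj : Pairwise (Function.onFun Disjoint A) := by
    intro m n hmn
    rw [Function.onFun, Set.disjoint_left]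
    intro ξ hm hn
    exact hmn ((hA_floor ξ m hm).symm.trans (hA_floor ξ n hn))
  have hUnion : (⋃ n, A n) = Set.univ :=
    Set.eq_univ_of_forall fun ξ => Set.mem_iUnion.2 ⟨⌊‖ξ‖⌋₊, hA_mem ξ⟩
  have hdecomp : ∀ g : EuclideanSpace ℝ (Fin 3) → ℝ≥0∞,
      (∫⁻ ξ, g ξ) = ∑' n, ∫⁻ ξ in A n, g ξ := by
    intro g
    rw [← lintegral_iUnion hAmeas hdisj g, hUnion, Measure.restrict_univ]
  -- weight function
  set h : EuclideanSpace ℝ (Fin 3) → ℝ≥0∞ := fun ξ => ENNReal.ofReal ((1 + ‖ξ‖ ^ 2) ^ s' * ‖F ξ‖ ^ 2) with hh_def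
  have hWpos : ∀ ξ : EuclideanSpace ℝ (Fin 3), (0 : ℝ) < (1 + ‖ξ‖ ^ 2) ^ s' := by
    intro ξ
    apply Real.rpow_pos_of_pos
    positivity
  have hh_meas : Measurable h := by
    apply ENNReal.measurable_ofReal.comp
    apply Measurable.mul
    · exact ((continuous_const.add (continuous_norm.pow 2)).rpow_const
        (fun (ξ : EuclideanSpace ℝ (Fin 3)) => Or.inl (ne_of_gt (by positivity : (0:ℝ) < 1 + ‖ξ‖ ^ 2)))).measurable
    · exact hFmeas.norm.pow_const 2
  set a : ℕ → ℝ≥0∞ := fun n => ∫⁻ ξ in A n, h ξ with ha_def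
  have hsum_a : ∑' n, a n = ⊤ := by
    rw [ha_def, ← hdecomp h, ← hHs']
  -- key identity for each ω
  have hkey : ∀ ω : Ω,
      (∫⁻ ξ : EuclideanSpace ℝ (Fin 3), ENNReal.ofReal ((1 + ‖ξ‖ ^ 2) ^ s' *
          ‖∑' n : ℕ, (if (n : ℝ) ≤ ‖ξ‖ ∧ ‖ξ‖ < n + 1
              then ((X n ω : ℝ) : ℂ) else 0) * F ξ‖ ^ 2))
        = ∑' n, ENNReal.ofReal ((X n ω) ^ 2) * a n := by
    intro ω
    have htsum : ∀ ξ : EuclideanSpace ℝ (Fin 3),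
        (∑' n : ℕ, (if (n : ℝ) ≤ ‖ξ‖ ∧ ‖ξ‖ < n + 1
            then ((X n ω : ℝ) : ℂ) else 0) * F ξ)
          = ((X ⌊‖ξ‖⌋₊ ω : ℝ) : ℂ) * F ξ := by
      intro ξ
      rw [tsum_eq_single ⌊‖ξ‖⌋₊ ?_]
      · exact if_pos (⟨Nat.floor_le (norm_nonneg ξ), Nat.lt_floor_add_one _⟩ :
          ((⌊‖ξ‖⌋₊ : ℝ) ≤ ‖ξ‖ ∧ ‖ξ‖ < (⌊‖ξ‖⌋₊ : ℝ) + 1)) ▸ rfl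
      · intro m hm
        rw [if_neg, zero_mul]
        intro hcond
        exact hm ((Nat.floor_eq_iff (norm_nonneg ξ)).2 hcond).symm
    have hinteg : ∀ ξ : EuclideanSpace ℝ (Fin 3),
        ENNReal.ofReal ((1 + ‖ξ‖ ^ 2) ^ s' *
          ‖∑' n : ℕ, (if (n : ℝ) ≤ ‖ξ‖ ∧ ‖ξ‖ < n + 1
              then ((X n ω : ℝ) : ℂ) else 0) * F ξ‖ ^ 2)
        = ENNReal.ofReal ((1 + ‖ξ‖ ^ 2) ^ s' *
            ((X ⌊‖ξ‖⌋₊ ω) ^ 2 * ‖F ξ‖ ^ 2)) := by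
      intro ξ
      rw [htsum ξ]
      congr 2
      rw [norm_mul, Complex.norm_real, Real.norm_eq_abs, mul_pow, sq_abs]
    simp only [hinteg]
    rw [hdecomp]
    congr 1
    funext n
    have hcongr : (∫⁻ ξ in A n, ENNReal.ofReal ((1 + ‖ξ‖ ^ 2) ^ s' *
            ((X ⌊‖ξ‖⌋₊ ω) ^ 2 * ‖F ξ‖ ^ 2)))
        = ∫⁻ ξ in A n, ENNReal.ofReal ((X n ω) ^ 2) * h ξ := by
      apply setLIntegral_congr_fun (hAmeas n)
      intro ξ hξ
      beta_reduce
      rw [hA_floor ξ n hξ, hh_def]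
      rw [← ENNReal.ofReal_mul (sq_nonneg (X n ω))]
      congr 1
      ring
    rw [hcongr, lintegral_const_mul _ hh_meas]
  have hprob := gaussian_tsum_top μ X hXmeas hindep hgauss a hsum_a
  filter_upwards [hprob] with ω hω
  rw [hkey ω]
  exact hω
end

section
/- Let n ∈ ℕ with n ≥ 1 and let f ∈ L²_rad(ℝ³) have Fourier support in the annulus {ξ : |ξ| ∈ [n, n+1]}. Then ‖f‖_{L^∞(ℝ³)} ≲ n ‖f‖_{L²(ℝ³)}, with absolute implicit constant; consequently, for 2 ≤ p ≤ ∞, ‖f‖_{L^p(ℝ³)} ≲ n^{1-2/p} ‖f‖_{L²(ℝ³)}. -/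
open MeasureTheory Real
open scoped RealInnerProductSpace ENNReal FourierTransform

noncomputable section

namespace RadialBernsteinAux

variable {V : Type*} [NormedAddCommGroup V] [InnerProductSpace ℝ V]
  [MeasurableSpace V] [BorelSpace V] [FiniteDimensional ℝ V]

/-- Fourier transform of the conjugate is the conjugate of the inverse transform. -/
lemma fourier_conj (g : V → ℂ) (x : V) :
    𝓕 (fun ξ => (starRingEnd ℂ) (g ξ)) x = (starRingEnd ℂ) (𝓕⁻ g x) := by
  rw [Real.fourier_eq', Real.fourierInv_eq', ← integral_conj]
  congr 1
  ext v
  simp only [smul_eq_mul, map_mul, ← Complex.exp_conj]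
  congr 2
  simp only [map_mul, Complex.conj_I, Complex.conj_ofReal, Complex.ofReal_mul,
    Complex.ofReal_neg]
  ring

/-- Plancherel identity for a continuous integrable function whose Fourier transform
is integrable. -/
lemma plancherel_aux (f : V → ℂ) (hc : Continuous f) (hf : Integrable f)
    (hFi : Integrable (𝓕 f)) :
    ∫ ξ, ‖𝓕 f ξ‖ ^ 2 = ∫ x, ‖f x‖ ^ 2 := by
  have hconj : Integrable (fun ξ => (starRingEnd ℂ) (𝓕 f ξ)) :=
    (Complex.conjCLE.toContinuousLinearMap : ℂ →L[ℝ] ℂ).integrable_comp hFi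
  have hflip : (innerₗ V).flip = innerₗ V := by
    apply LinearMap.ext; intro x; apply LinearMap.ext; intro y
    simpa using real_inner_comm x y
  have key := VectorFourier.integral_fourierIntegral_smul_eq_flip
      (L := innerₗ V) (μ := (volume : Measure V)) (ν := (volume : Measure V))
      Real.continuous_fourierChar (by simpa using continuous_inner) hf hconj
  rw [hflip] at key
  have key2 : ∫ ξ, (𝓕 f ξ) * (starRingEnd ℂ) (𝓕 f ξ)
      = ∫ x, f x * (starRingEnd ℂ) (f x) := by
    have h1 : ∀ x, 𝓕 (fun ξ => (starRingEnd ℂ) (𝓕 f ξ)) x = (starRingEnd ℂ) (f x) := by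
      intro x
      rw [fourier_conj, hc.fourierInv_fourier_eq hf hFi]
    calc ∫ ξ, (𝓕 f ξ) * (starRingEnd ℂ) (𝓕 f ξ)
        = ∫ x, f x • (𝓕 (fun ξ => (starRingEnd ℂ) (𝓕 f ξ)) x) := key
      _ = ∫ x, f x * (starRingEnd ℂ) (f x) := by
          simp_rw [h1, smul_eq_mul]
  have hnsq : ∀ z : ℂ, z * (starRingEnd ℂ) z = ((‖z‖ ^ 2 : ℝ) : ℂ) := by
    intro z
    rw [Complex.mul_conj]
    norm_cast
    rw [Complex.normSq_eq_norm_sq]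
  simp_rw [hnsq] at key2
  apply Complex.ofReal_injective
  exact (integral_ofReal (𝕜 := ℂ)).symm.trans (key2.trans (integral_ofReal (𝕜 := ℂ)))

end RadialBernsteinAux

open RadialBernsteinAux

/-- Bernstein estimate on radial annuli: if `f ∈ L²_rad(ℝ³)` (continuous, integrable)
has Fourier transform supported in `{ξ : n ≤ ‖ξ‖ ≤ n+1}` with `n ≥ 1`, then
`‖f‖_{L^∞} ≤ C n ‖f‖_{L²}` and, for `2 ≤ p ≤ ∞`, `‖f‖_{L^p} ≤ C n^{1-2/p} ‖f‖_{L²}`,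
with an absolute constant `C`. -/
theorem radial_annulus_bernstein :
    ∃ C : ℝ, 0 < C ∧
      ∀ (n : ℕ), 1 ≤ n →
        ∀ (f : EuclideanSpace ℝ (Fin 3) → ℂ),
          Continuous f → Integrable f → MemLp f 2 →
          (∀ x y : EuclideanSpace ℝ (Fin 3), ‖x‖ = ‖y‖ → f x = f y) →
          (∀ ξ : EuclideanSpace ℝ (Fin 3),
            (((2 * π) ^ (-(3:ℝ)/2) : ℝ) *
              ∫ x : EuclideanSpace ℝ (Fin 3),
                Complex.exp (-Complex.I * (⟪ξ, x⟫ : ℝ)) * f x) ≠ 0 →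
            ‖ξ‖ ∈ Set.Icc (n : ℝ) (n + 1)) →
          eLpNorm f ⊤ volume ≤ ENNReal.ofReal (C * n) * eLpNorm f 2 volume ∧
          ∀ p : ℝ≥0∞, 2 ≤ p →
            eLpNorm f p volume
              ≤ ENNReal.ofReal (C * (n : ℝ) ^ (1 - 2 / p.toReal)) *
                  eLpNorm f 2 volume := by
  classical
  set V3 := EuclideanSpace ℝ (Fin 3)
  set B : ℝ := (volume (Metric.ball (0 : V3) 1)).toReal with hBdef
  have hB0 : 0 ≤ B := ENNReal.toReal_nonneg
  refine ⟨max 1 (Real.sqrt (7 * B)), lt_of_lt_of_le one_pos (le_max_left _ _), ?_⟩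
  set C : ℝ := max 1 (Real.sqrt (7 * B)) with hCdef
  have hC1 : (1:ℝ) ≤ C := le_max_left _ _
  have hC0 : (0:ℝ) ≤ C := le_trans zero_le_one hC1
  intro n hn f hcont hint hL2 _hrad hsupp
  have hn1 : (1:ℝ) ≤ (n:ℝ) := by exact_mod_cast hn
  have hn0 : (0:ℝ) ≤ (n:ℝ) := le_trans zero_le_one hn1
  have hπ : (3:ℝ) < π := Real.pi_gt_three
  have h2π : (0:ℝ) < 2 * π := by linarith
  -- support of the (mathlib-normalized) Fourier transform
  have hsupp' : ∀ w : V3, 𝓕 f w ≠ 0 →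
      (n:ℝ) / (2*π) ≤ ‖w‖ ∧ ‖w‖ ≤ ((n:ℝ)+1) / (2*π) := by
    intro w hw
    have hint_eq : (∫ x : V3, Complex.exp (-Complex.I * (⟪(2*π) • w, x⟫ : ℝ)) * f x)
        = 𝓕 f w := by
      rw [Real.fourier_eq']
      congr 1
      ext x
      rw [smul_eq_mul]
      congr 1
      rw [real_inner_smul_left]
      have : ⟪w, x⟫ = ⟪x, w⟫ := real_inner_comm x w
      rw [this]
      push_cast
      ring
    have hξ := hsupp ((2*π) • w) ?_
    · have hnorm : ‖(2*π) • w‖ = (2*π) * ‖w‖ := by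
        rw [norm_smul, Real.norm_eq_abs, abs_of_pos h2π]
      obtain ⟨h1, h2⟩ := hξ
      rw [hnorm] at h1 h2
      constructor
      · rw [div_le_iff₀ h2π]; linarith [h1]
      · rw [le_div_iff₀ h2π]; linarith [h2]
    · rw [hint_eq]
      apply mul_ne_zero _ hw
      simp only [ne_eq, Complex.ofReal_eq_zero]
      exact ne_of_gt (Real.rpow_pos_of_pos h2π _)
  set r : ℝ := (n:ℝ) / (2*π) with hrdef
  set R : ℝ := ((n:ℝ)+1) / (2*π) with hRdef
  have hr0 : 0 ≤ r := div_nonneg hn0 (le_of_lt h2π)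
  have hR0 : 0 ≤ R := div_nonneg (by linarith) (le_of_lt h2π)
  have hfr : Module.finrank ℝ V3 = 3 := finrank_euclideanSpace_fin
  have hrR : r ≤ R := by
    rw [hrdef, hRdef]
    exact (div_le_div_iff_of_pos_right h2π).mpr (by linarith)
  set A : Set V3 := Metric.closedBall 0 R \ Metric.ball 0 r with hAdef
  have hA_meas : MeasurableSet A :=
    (measurableSet_closedBall).diff measurableSet_ball
  have hzero : ∀ w ∉ A, 𝓕 f w = 0 := by
    intro w hw
    by_contra h
    obtain ⟨h1, h2⟩ := hsupp' w h
    exact hw ⟨by simpa [Metric.mem_closedBall, dist_zero_right] using h2,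
      by simpa [Metric.mem_ball, dist_zero_right] using not_lt.2 h1⟩
  have hA_compact : IsCompact A :=
    (isCompact_closedBall (0:V3) R).of_isClosed_subset
      ((Metric.isClosed_closedBall).sdiff Metric.isOpen_ball) Set.diff_subset
  have hFc : Continuous (𝓕 f) :=
    VectorFourier.fourierIntegral_continuous Real.continuous_fourierChar
      (by simpa using continuous_inner) hint
  have hFsupp : HasCompactSupport (𝓕 f) := HasCompactSupport.intro hA_compact hzero
  have hFi : Integrable (𝓕 f) := hFc.integrable_of_hasCompactSupport hFsupp
  have hF2 : MemLp (𝓕 f) 2 volume := hFc.memLp_of_hasCompactSupport hFsupp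
  -- Plancherel
  have hplan : ∫ ξ, ‖𝓕 f ξ‖ ^ 2 = ∫ x, ‖f x‖ ^ 2 := plancherel_aux f hcont hint hFi
  set J : ℝ := ∫ x, ‖f x‖ ^ 2 with hJdef
  have hJ0 : 0 ≤ J := integral_nonneg (fun x => by positivity)
  set N : ℝ := Real.sqrt J with hNdef
  have hN0 : 0 ≤ N := Real.sqrt_nonneg _
  -- volume of the annulus
  have hvol_fin : volume A < ⊤ :=
    lt_of_le_of_lt (measure_mono Set.diff_subset) measure_closedBall_lt_top
  have hvol : (volume A).toReal ≤ 7 * B * (n:ℝ)^2 := by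
    have hd : volume A = volume (Metric.closedBall (0:V3) R) - volume (Metric.ball (0:V3) r) := by
      rw [hAdef]
      exact measure_diff (Metric.ball_subset_closedBall.trans
        (Metric.closedBall_subset_closedBall hrR)) measurableSet_ball.nullMeasurableSet
        (ne_of_lt measure_ball_lt_top)
    have hcb : volume (Metric.closedBall (0:V3) R)
        = ENNReal.ofReal (R ^ 3) * volume (Metric.ball (0:V3) 1) := by
      rw [Measure.addHaar_closedBall _ _ hR0, hfr]
    have hbb : volume (Metric.ball (0:V3) r)
        = ENNReal.ofReal (r ^ 3) * volume (Metric.ball (0:V3) 1) := by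
      rw [Measure.addHaar_ball _ _ hr0, hfr]
    have hle : volume (Metric.ball (0:V3) r) ≤ volume (Metric.closedBall (0:V3) R) := by
      rw [hcb, hbb]
      exact mul_le_mul_left (ENNReal.ofReal_le_ofReal (pow_le_pow_left₀ hr0 hrR 3)) _
    rw [hd, ENNReal.toReal_sub_of_le hle (by
        rw [hcb]; exact (ENNReal.mul_lt_top ENNReal.ofReal_lt_top measure_ball_lt_top).ne),
      hcb, hbb, ENNReal.toReal_mul, ENNReal.toReal_mul,
      ENNReal.toReal_ofReal (by positivity), ENNReal.toReal_ofReal (by positivity)]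
    rw [← hBdef]
    have hkey : R ^ 3 - r ^ 3 ≤ 7 * (n:ℝ)^2 := by
      rw [hRdef, hrdef, div_pow, div_pow, div_sub_div_same]
      have h1 : ((n:ℝ)+1)^3 - (n:ℝ)^3 ≤ 7 * (n:ℝ)^2 := by nlinarith
      have h2 : (1:ℝ) ≤ (2*π)^3 := by
        calc (1:ℝ) = 1^3 := by norm_num
          _ ≤ (2*π)^3 := pow_le_pow_left₀ (by norm_num) (by linarith) 3
      calc (((n:ℝ)+1)^3 - (n:ℝ)^3) / (2*π)^3 ≤ ((n:ℝ)+1)^3 - (n:ℝ)^3 :=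
            div_le_self (by nlinarith) h2
        _ ≤ 7 * (n:ℝ)^2 := h1
    calc R^3 * B - r^3 * B = (R^3 - r^3) * B := by ring
      _ ≤ 7 * (n:ℝ)^2 * B := mul_le_mul_of_nonneg_right hkey hB0
      _ = 7 * B * (n:ℝ)^2 := by ring
  -- pointwise bound
  have hpt : ∀ x, ‖f x‖ ≤ C * (n:ℝ) * N := by
    intro x
    have hinv : 𝓕⁻ (𝓕 f) x = f x := by
      rw [hcont.fourierInv_fourier_eq hint hFi]
    have h1 : ‖f x‖ ≤ ∫ ξ, ‖𝓕 f ξ‖ := by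
      rw [← hinv, Real.fourierInv_eq_fourier_neg]
      exact VectorFourier.norm_fourierIntegral_le_integral_norm _ _ _ _ _
    have h2 : ∫ ξ, ‖𝓕 f ξ‖ = ∫ ξ in A, ‖𝓕 f ξ‖ := by
      rw [← integral_indicator hA_meas]
      congr 1
      ext ξ
      by_cases hξ : ξ ∈ A
      · simp [hξ]
      · simp [hξ, hzero ξ hξ]
    haveI : IsFiniteMeasure (volume.restrict A) :=
      ⟨by rw [Measure.restrict_apply_univ]; exact hvol_fin⟩
    have hconj22 : (2:ℝ).HolderConjugate 2 := Real.HolderConjugate.two_two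
    have hsqint : Integrable (fun ξ => ‖𝓕 f ξ‖ ^ 2) := by
      apply Continuous.integrable_of_hasCompactSupport
      · exact (hFc.norm).pow 2
      · exact HasCompactSupport.intro hA_compact (fun w hw => by simp [hzero w hw])
    have h3 : ∫ ξ in A, ‖𝓕 f ξ‖ ≤ N * Real.sqrt ((volume A).toReal) := by
      have hCS := integral_mul_le_Lp_mul_Lq_of_nonneg (μ := volume.restrict A) hconj22
        (f := fun ξ => ‖𝓕 f ξ‖) (g := fun _ => (1:ℝ))
        (ae_of_all _ (fun ξ => norm_nonneg _))
        (ae_of_all _ (fun _ => zero_le_one))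
        (by rw [show ENNReal.ofReal (2:ℝ) = 2 by norm_num]; exact (hF2.norm).restrict A)
        (by rw [show ENNReal.ofReal (2:ℝ) = 2 by norm_num]; exact memLp_const 1)
      simp only [mul_one] at hCS
      have hrpow2 : ∀ y : ℝ, y ^ (2:ℝ) = y ^ 2 := fun y => by
        rw [show (2:ℝ) = ((2:ℕ):ℝ) by norm_num, Real.rpow_natCast]
      have e1 : ∫ ξ in A, ‖𝓕 f ξ‖ ^ (2:ℝ) ∂volume ≤ J := by
        simp_rw [hrpow2]
        rw [← hplan]
        exact setIntegral_le_integral hsqint (ae_of_all _ (fun ξ => by positivity))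
      have e2 : ∫ _ξ in A, ((1:ℝ)) ^ (2:ℝ) ∂volume = (volume A).toReal := by
        simp [Real.one_rpow, Measure.real]
      have e3 : (∫ ξ in A, ‖𝓕 f ξ‖ ^ (2:ℝ) ∂volume) ^ ((1:ℝ)/2)
          ≤ J ^ ((1:ℝ)/2) := by
        apply Real.rpow_le_rpow ?_ e1 (by norm_num)
        apply setIntegral_nonneg hA_meas
        intro ξ _
        positivity
      calc ∫ ξ in A, ‖𝓕 f ξ‖ ∂volume
          ≤ (∫ ξ in A, ‖𝓕 f ξ‖ ^ (2:ℝ) ∂volume) ^ ((1:ℝ)/2)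
            * (∫ _ξ in A, ((1:ℝ)) ^ (2:ℝ) ∂volume) ^ ((1:ℝ)/2) := hCS
        _ ≤ J ^ ((1:ℝ)/2) * ((volume A).toReal) ^ ((1:ℝ)/2) := by
            rw [e2]
            exact mul_le_mul_of_nonneg_right e3 (Real.rpow_nonneg ENNReal.toReal_nonneg _)
        _ = N * Real.sqrt ((volume A).toReal) := by
            rw [hNdef, Real.sqrt_eq_rpow, Real.sqrt_eq_rpow]
    have h4 : Real.sqrt ((volume A).toReal) ≤ Real.sqrt (7*B) * (n:ℝ) := by
      calc Real.sqrt ((volume A).toReal) ≤ Real.sqrt (7 * B * (n:ℝ)^2) :=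
            Real.sqrt_le_sqrt hvol
        _ = Real.sqrt (7*B) * (n:ℝ) := by
            rw [Real.sqrt_mul (by positivity), Real.sqrt_sq hn0]
    calc ‖f x‖ ≤ ∫ ξ, ‖𝓕 f ξ‖ := h1
      _ = ∫ ξ in A, ‖𝓕 f ξ‖ := h2
      _ ≤ N * Real.sqrt ((volume A).toReal) := h3
      _ ≤ N * (Real.sqrt (7*B) * (n:ℝ)) :=
          mul_le_mul_of_nonneg_left h4 hN0
      _ ≤ N * (C * (n:ℝ)) := by
          apply mul_le_mul_of_nonneg_left _ hN0
          exact mul_le_mul_of_nonneg_right (le_max_right 1 _) hn0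
      _ = C * (n:ℝ) * N := by ring
  -- L² norm in terms of J
  have h2norm : eLpNorm f 2 volume = ENNReal.ofReal N := by
    rw [hL2.eLpNorm_eq_integral_rpow_norm two_ne_zero ENNReal.ofNat_ne_top]
    congr 1
    have hrpow2 : ∀ y : ℝ, y ^ ((2:ℝ≥0∞).toReal) = y ^ 2 := fun y => by
      rw [ENNReal.toReal_ofNat, show (2:ℝ) = ((2:ℕ):ℝ) by norm_num, Real.rpow_natCast]
    simp_rw [hrpow2]
    rw [hNdef, hJdef, Real.sqrt_eq_rpow, ENNReal.toReal_ofNat]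
    norm_num
  have htop : eLpNorm f ⊤ volume ≤ ENNReal.ofReal (C * n) * eLpNorm f 2 volume := by
    rw [eLpNorm_exponent_top, h2norm, ← ENNReal.ofReal_mul (by positivity)]
    exact eLpNormEssSup_le_of_ae_bound (ae_of_all _ hpt)
  refine ⟨htop, ?_⟩
  intro p hp
  by_cases hptop : p = ⊤
  · subst hptop
    simpa [Real.rpow_one] using htop
  · have hp0 : p ≠ 0 := by
      intro h
      rw [h] at hp
      exact absurd hp (by simp)
    have hq2 : (2:ℝ) ≤ p.toReal := by
      have := ENNReal.toReal_mono hptop hp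
      simpa using this
    set q : ℝ := p.toReal with hqdef
    have hq0 : (0:ℝ) < q := lt_of_lt_of_le two_pos hq2
    set θ : ℝ := 1 - 2 / q with hθdef
    have hθ0 : 0 ≤ θ := by
      rw [hθdef]
      have : 2 / q ≤ 1 := by
        rw [div_le_one hq0]; exact hq2
      linarith
    have hθ1 : θ ≤ 1 := by
      rw [hθdef]
      have : 0 ≤ 2 / q := by positivity
      linarith
    by_cases hN : N = 0
    · have hf0 : f = fun _ => (0:ℂ) := by
        funext x
        have := hpt x
        rw [hN, mul_zero] at this
        exact norm_le_zero_iff.1 this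
      rw [hf0]
      simp [eLpNorm_zero]
    · have hNpos : 0 < N := lt_of_le_of_ne hN0 (Ne.symm hN)
      set M : ℝ := C * (n:ℝ) * N with hMdef
      have hM0 : 0 < M := by
        apply mul_pos (mul_pos (lt_of_lt_of_le one_pos hC1) (lt_of_lt_of_le one_pos hn1)) hNpos
      -- lintegral of ‖f‖² in terms of N
      have hinvq : (0:ℝ) ≤ 1/q := div_nonneg zero_le_one hq0.le
      have hI2 : ∫⁻ x, (‖f x‖₊ : ℝ≥0∞) ^ (2:ℝ) = (ENNReal.ofReal N) ^ (2:ℝ) := by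
        have h := h2norm
        rw [eLpNorm_eq_lintegral_rpow_enorm_toReal two_ne_zero ENNReal.ofNat_ne_top] at h
        simp only [ENNReal.toReal_ofNat] at h
        have h' := congrArg (fun z : ℝ≥0∞ => z ^ (2:ℝ)) h
        have he : (1/2 : ℝ) * 2 = 1 := by norm_num
        rw [← ENNReal.rpow_mul, he, ENNReal.rpow_one] at h'
        exact h'
      -- interpolation
      have hmain : eLpNorm f p volume ≤ ENNReal.ofReal ((C * (n:ℝ))^θ * N) := by
        rw [eLpNorm_eq_lintegral_rpow_enorm_toReal hp0 hptop, ← hqdef]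
        have hpt' : ∀ x, ((‖f x‖₊ : ℝ≥0∞)) ^ (q:ℝ)
            ≤ (ENNReal.ofReal M) ^ (q - 2) * ((‖f x‖₊ : ℝ≥0∞)) ^ (2:ℝ) := by
          intro x
          have ha : ((‖f x‖₊ : ℝ≥0∞)) ≤ ENNReal.ofReal M := by
            rw [← enorm_eq_nnnorm, ← ofReal_norm]
            exact ENNReal.ofReal_le_ofReal (hpt x)
          calc ((‖f x‖₊ : ℝ≥0∞)) ^ (q:ℝ)
              = ((‖f x‖₊ : ℝ≥0∞)) ^ (q - 2) * ((‖f x‖₊ : ℝ≥0∞)) ^ (2:ℝ) := by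
                rw [← ENNReal.rpow_add_of_nonneg _ _ (by linarith) (by norm_num)]
                norm_num
            _ ≤ (ENNReal.ofReal M) ^ (q - 2) * ((‖f x‖₊ : ℝ≥0∞)) ^ (2:ℝ) :=
                mul_le_mul_left (ENNReal.rpow_le_rpow ha (by linarith)) _
        have hlint : ∫⁻ x, ((‖f x‖₊ : ℝ≥0∞)) ^ (q:ℝ)
            ≤ (ENNReal.ofReal M) ^ (q - 2) * (ENNReal.ofReal N) ^ (2:ℝ) := by
          calc ∫⁻ x, ((‖f x‖₊ : ℝ≥0∞)) ^ (q:ℝ)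
              ≤ ∫⁻ x, (ENNReal.ofReal M) ^ (q - 2) * ((‖f x‖₊ : ℝ≥0∞)) ^ (2:ℝ) :=
                lintegral_mono hpt'
            _ = (ENNReal.ofReal M) ^ (q - 2) * ∫⁻ x, ((‖f x‖₊ : ℝ≥0∞)) ^ (2:ℝ) :=
                lintegral_const_mul' _ _ (by
                  exact ENNReal.rpow_ne_top_of_nonneg (by linarith) ENNReal.ofReal_ne_top)
            _ = (ENNReal.ofReal M) ^ (q - 2) * (ENNReal.ofReal N) ^ (2:ℝ) := by rw [hI2]
        calc (∫⁻ x, ((‖f x‖₊ : ℝ≥0∞)) ^ q) ^ ((1:ℝ)/q)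
            ≤ ((ENNReal.ofReal M) ^ (q - 2) * (ENNReal.ofReal N) ^ (2:ℝ)) ^ ((1:ℝ)/q) :=
              ENNReal.rpow_le_rpow hlint hinvq
          _ = (ENNReal.ofReal M) ^ ((q-2)/q) * (ENNReal.ofReal N) ^ ((2:ℝ)/q) := by
              rw [ENNReal.mul_rpow_of_nonneg _ _ hinvq, ← ENNReal.rpow_mul,
                ← ENNReal.rpow_mul, mul_one_div, mul_one_div]
          _ = ENNReal.ofReal (M ^ ((q-2)/q) * N ^ (2/q)) := by
              rw [ENNReal.ofReal_rpow_of_nonneg (le_of_lt hM0)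
                  (div_nonneg (by linarith) hq0.le),
                ENNReal.ofReal_rpow_of_nonneg hN0 (div_nonneg (by norm_num) hq0.le),
                ← ENNReal.ofReal_mul (Real.rpow_nonneg (le_of_lt hM0) _)]
          _ = ENNReal.ofReal ((C * (n:ℝ))^θ * N) := by
              congr 1
              have hqθ : (q - 2)/q = θ := by
                rw [hθdef]; field_simp
              rw [hqθ, hMdef, Real.mul_rpow (by positivity) hN0, mul_assoc,
                ← Real.rpow_add hNpos]
              have : θ + 2/q = 1 := by rw [hθdef]; ring
              rw [this, Real.rpow_one]
      calc eLpNorm f p volume ≤ ENNReal.ofReal ((C * (n:ℝ))^θ * N) := hmain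
        _ ≤ ENNReal.ofReal (C * (n:ℝ)^θ * N) := by
            apply ENNReal.ofReal_le_ofReal
            apply mul_le_mul_of_nonneg_right _ hN0
            rw [Real.mul_rpow hC0 hn0]
            apply mul_le_mul_of_nonneg_right _ (Real.rpow_nonneg hn0 _)
            calc C ^ θ ≤ C ^ (1:ℝ) := Real.rpow_le_rpow_of_exponent_le hC1 hθ1
              _ = C := Real.rpow_one C
        _ = ENNReal.ofReal (C * (n:ℝ)^θ) * ENNReal.ofReal N := by
            rw [← ENNReal.ofReal_mul (by positivity)]
        _ = ENNReal.ofReal (C * (n:ℝ) ^ (1 - 2 / p.toReal)) * eLpNorm f 2 volume := by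
            rw [h2norm, hθdef, hqdef]
end
end
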